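/- Let Δ = Δ_1 ⊔ … ⊔ Δ_m (m ≥ 3) be a regular partition of the root system A_n = {e_i - e_j : 0 ≤ i ≠ j ≤ n}. If β, γ ∈ Δ with β - γ ∈ Δ, β ∈ Δ_1 with β also equal to a 'loop' (meaning -β ∈ Δ_1 as well), and -γ ∈ Δ_2 with 2 ≠ 1, then β - γ ∈ Δ_2. -/
import Mathlib


/-- Standard basis vector `e i` in `ℤ^{n+1}`. -/
def eb {n : ℕ} (i : Fin n) : Fin n → ℤ := fun k => if k = i then 1 else 0

/-- The root system of type `A_n`, realized as `{e_i - e_j : i ≠ j}` in `ℤ^{n+1}`. -/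
def rootsA (n : ℕ) : Set (Fin (n + 1) → ℤ) :=
  {v | ∃ i j : Fin (n + 1), i ≠ j ∧ v = eb i - eb j}

/-- A subset `S` of a root system `Δ` is closed if `α, β ∈ S` and `α + β ∈ Δ`
imply `α + β ∈ S`. -/
def RootClosed {n : ℕ} (Δ S : Set (Fin n → ℤ)) : Prop :=
  ∀ a ∈ S, ∀ b ∈ S, a + b ∈ Δ → a + b ∈ S

theorem stmt12 (n : ℕ) (m : ℕ) (hm : 3 ≤ m) (P : Fin m → Set (Fin (n + 1) → ℤ))
    (hcover : (⋃ i, P i) = rootsA n)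
    (hne : ∀ i, (P i).Nonempty)
    (hdisj : Pairwise fun i j => Disjoint (P i) (P j))
    (hclosed : ∀ i, RootClosed (rootsA n) (P i))
    (hclosed2 : ∀ i j, i ≠ j → RootClosed (rootsA n) (P i ∪ P j))
    (β γ : Fin (n + 1) → ℤ) (hβ : β ∈ rootsA n) (hγ : γ ∈ rootsA n)
    (hdiff : β - γ ∈ rootsA n)
    (a b : Fin m) (hab : a ≠ b)
    (hβa : β ∈ P a) (hnβa : -β ∈ P a) (hnγb : -γ ∈ P b) :
    β - γ ∈ P b := by
  have hmem : β - γ ∈ ⋃ i, P i := by rw [hcover]; exact hdiff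
  obtain ⟨c, hc⟩ := Set.mem_iUnion.mp hmem
  have hγroot : -γ ∈ rootsA n := by
    have : -γ ∈ ⋃ i, P i := Set.mem_iUnion.mpr ⟨b, hnγb⟩
    rwa [hcover] at this
  have hsum : (β - γ) + (-β) = -γ := by abel
  by_contra hcb'
  have hcb : c ≠ b := fun h => hcb' (h ▸ hc)
  by_cases hca : c = a
  · subst hca
    have h1 : -γ ∈ P c := by
      have := hclosed c _ hc _ hnβa (hsum ▸ hγroot)
      rwa [hsum] at this
    exact (hdisj hcb).le_bot ⟨h1, hnγb⟩ |>.elim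
  · have h1 : -γ ∈ P c ∪ P a := by
      have := hclosed2 c a hca _ (Or.inl hc) _ (Or.inr hnβa) (hsum ▸ hγroot)
      rwa [hsum] at this
    rcases h1 with h1 | h1
    · exact (hdisj hcb).le_bot ⟨h1, hnγb⟩ |>.elim
    · exact (hdisj hab).le_bot ⟨h1, hnγb⟩ |>.elim
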